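/- For uniform distributions U[a_i, b_i] with 0 < a_i < b_i, the maximizer over the set {c ∈ ℝ^M : Σ c_i = K, c_i > 0} of the function Σ_{i=1}^M (b_i − (b_i − a_i)/(c_i n + 1)) is given by ĉ_i = (√(b_i − a_i) / ((Σ_j √(b_j − a_j))/M)) (K/M + 1/n) − 1/n, provided all these ĉ_i are positive. -/
import Mathlib


/-- For uniform distributions `U[a_i, b_i]`, the Lagrange-multiplier values `ĉ_i` maximize
`Σ_i (b_i − (b_i − a_i)/(c_i n + 1))` over `{c : Σ c_i = K, c_i > 0}`, provided all `ĉ_i > 0`. -/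
theorem uniform_lagrange_maximizer
    {M : ℕ} (hM : 0 < M) (K n : ℕ) (hK : 0 < K) (hn : 0 < n) (hKM : K < M)
    (a b : Fin M → ℝ) (ha : ∀ i, 0 < a i) (hab : ∀ i, a i < b i)
    (chat : Fin M → ℝ)
    (hchat : ∀ i, chat i =
      Real.sqrt (b i - a i) / ((∑ j, Real.sqrt (b j - a j)) / M) * (K / M + 1 / n) - 1 / n)
    (hpos : ∀ i, 0 < chat i) :
    (∑ i, chat i = K) ∧
    ∀ c : Fin M → ℝ, (∀ i, 0 < c i) → ∑ i, c i = K →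
      ∑ i, (b i - (b i - a i) / (c i * n + 1))
        ≤ ∑ i, (b i - (b i - a i) / (chat i * n + 1)) := by
  have hdpos : ∀ i, (0:ℝ) < b i - a i := fun i => sub_pos.2 (hab i)
  have hne : (Finset.univ : Finset (Fin M)).Nonempty :=
    Finset.univ_nonempty_iff.mpr (Fin.pos_iff_nonempty.mp hM)
  set S : ℝ := ∑ j, Real.sqrt (b j - a j) with hS
  have hSpos : 0 < S := Finset.sum_pos (fun i _ => Real.sqrt_pos.2 (hdpos i)) hne
  have hMne : (M:ℝ) ≠ 0 := Nat.cast_ne_zero.2 hM.ne'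
  have hnpos : (0:ℝ) < (n:ℝ) := Nat.cast_pos.2 hn
  have hT : (0:ℝ) < (K:ℝ) * n + M := by positivity
  have hchat' : ∀ i, chat i * n + 1 = Real.sqrt (b i - a i) * (((K:ℝ) * n + M) / S) := by
    intro i
    rw [hchat i]
    field_simp
    ring
  have hchatsum : ∑ i, chat i = K := by
    have h1 : ∀ i, chat i =
        Real.sqrt (b i - a i) * (((K:ℝ) * n + M) / (S * n)) - 1 / n := by
      intro i
      have h := hchat' i
      field_simp at h ⊢
      nlinarith [h]
    rw [Finset.sum_congr rfl (fun i _ => h1 i), Finset.sum_sub_distrib,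
      ← Finset.sum_mul, ← hS]
    simp only [Finset.sum_const, Finset.card_univ, Fintype.card_fin, nsmul_eq_mul]
    field_simp
    ring
  refine ⟨hchatsum, ?_⟩
  intro c hc hcsum
  have hchatval : ∑ i, (b i - a i) / (chat i * n + 1) = S * S / ((K:ℝ) * n + M) := by
    rw [Finset.sum_congr rfl (fun i _ => by rw [hchat' i])]
    have h2 : ∀ i, (b i - a i) / (Real.sqrt (b i - a i) * (((K:ℝ) * n + M) / S))
        = Real.sqrt (b i - a i) * (S / ((K:ℝ) * n + M)) := by
      intro i
      rw [div_mul_eq_div_div, Real.div_sqrt, div_div_eq_mul_div, mul_div_assoc]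
    rw [Finset.sum_congr rfl (fun i _ => h2 i), ← Finset.sum_mul, ← hS]
    rw [mul_div_assoc]
  have key : S * S / ((K:ℝ) * n + M) ≤ ∑ i, (b i - a i) / (c i * n + 1) := by
    have htpos : ∀ i ∈ Finset.univ, (0:ℝ) < c i * n + 1 := fun i _ => by
      have := hc i; positivity
    have htsum : ∑ i, (c i * (n:ℝ) + 1) = (K:ℝ) * n + M := by
      rw [Finset.sum_add_distrib, ← Finset.sum_mul, hcsum]
      simp [Finset.card_univ]
    have hcs := Finset.sq_sum_div_le_sum_sq_div Finset.univ
      (fun i => Real.sqrt (b i - a i)) htpos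
    rw [htsum, ← hS] at hcs
    have hsq : ∀ i, Real.sqrt (b i - a i) ^ 2 = b i - a i :=
      fun i => Real.sq_sqrt (hdpos i).le
    calc S * S / ((K:ℝ) * n + M) = S ^ 2 / ((K:ℝ) * n + M) := by ring_nf
      _ ≤ ∑ i, Real.sqrt (b i - a i) ^ 2 / (c i * n + 1) := hcs
      _ = ∑ i, (b i - a i) / (c i * n + 1) := by
          exact Finset.sum_congr rfl fun i _ => by rw [hsq i]
  rw [Finset.sum_sub_distrib, Finset.sum_sub_distrib]
  have := hchatval ▸ key
  linarith
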